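/- Let X₁, X₂, … be independent and identically distributed random variables on a probability space (Ω, 𝔽, P) with values in a measurable space 𝒳. Let Θ ⊂ ℝ^d contain an open neighborhood Θ₀ of a point θ₀, and let {f_θ : θ ∈ Θ} be a collection of measurable functions from 𝒳 to ℝ^k such that θ ↦ f_θ(x) is continuous on Θ₀ for every x ∈ 𝒳, and such that there exists a measurable function F : 𝒳 → ℝ with ‖f_θ(x)‖ ≤ F(x) for all θ ∈ Θ₀ and x ∈ 𝒳 and E[F(X₁)] < ∞. Let θ̂ₙ : Ω → Θ be measurable and suppose θ̂ₙ converges in probability to θ₀. Then the plug-in empirical average (1/n) Σ_{i=1}^{n} f_{θ̂ₙ}(X_i) converges in probability to E[f_{θ₀}(X₁)]. -/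

import Mathlib

open MeasureTheory ProbabilityTheory

/-- If `X₁, X₂, …` are i.i.d. with values in a measurable space `𝒳`, `{f_θ : θ ∈ Θ}` is a
collection of measurable functions `𝒳 → ℝᵏ`, continuous in `θ` on an open neighborhood `Θ₀`
of `θ₀` and dominated on `Θ₀` by an integrable function `F`, and `θ̂ₙ → θ₀` in probability,
then the plug-in empirical average `(1/n) Σ_{i=1}^n f_{θ̂ₙ}(X_i)` converges in probability
to `E[f_{θ₀}(X₁)]`. -/
theorem stmt5 {Ω 𝒳 : Type*} [MeasurableSpace Ω] [m𝒳 : MeasurableSpace 𝒳]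
    (P : Measure Ω) [IsProbabilityMeasure P]
    (X : ℕ → Ω → 𝒳) (hX_meas : ∀ i, Measurable (X i))
    (hX_indep : iIndepFun X P)
    (hX_ident : ∀ i, Measure.map (X i) P = Measure.map (X 0) P)
    (d k : ℕ) (Θ Θ₀ : Set (EuclideanSpace ℝ (Fin d))) (θ₀ : EuclideanSpace ℝ (Fin d))
    (hΘ₀open : IsOpen Θ₀) (hθ₀ : θ₀ ∈ Θ₀) (hΘ₀Θ : Θ₀ ⊆ Θ)
    (f : EuclideanSpace ℝ (Fin d) → 𝒳 → EuclideanSpace ℝ (Fin k))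
    (hf_meas : ∀ θ ∈ Θ, Measurable (f θ))
    (hf_cont : ∀ x : 𝒳, ContinuousOn (fun θ => f θ x) Θ₀)
    (F : 𝒳 → ℝ) (hF_meas : Measurable F)
    (hF_dom : ∀ θ ∈ Θ₀, ∀ x : 𝒳, ‖f θ x‖ ≤ F x)
    (hF_int : Integrable (fun ω => F (X 0 ω)) P)
    (θhat : ℕ → Ω → EuclideanSpace ℝ (Fin d))
    (hθhat_meas : ∀ n, Measurable (θhat n))
    (hθhat_mem : ∀ n ω, θhat n ω ∈ Θ)
    (hθhat_tendsto : TendstoInMeasure P θhat Filter.atTop (fun _ => θ₀)) :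
    TendstoInMeasure P
      (fun (n : ℕ) (ω : Ω) => (n : ℝ)⁻¹ • ∑ i ∈ Finset.range n, f (θhat n ω) (X i ω))
      Filter.atTop (fun _ => ∫ ω, f θ₀ (X 0 ω) ∂P) := by
  classical
  -- Basic facts
  have hθ₀Θ : θ₀ ∈ Θ := hΘ₀Θ hθ₀
  have hF0 : ∀ x, 0 ≤ F x := fun x => (norm_nonneg _).trans (hF_dom θ₀ hθ₀ x)
  have hfθ₀_meas : Measurable (f θ₀) := hf_meas θ₀ hθ₀Θ
  -- a dense sequence in the parameter space
  obtain ⟨u, hu⟩ := TopologicalSpace.exists_dense_seq (EuclideanSpace ℝ (Fin d))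
  -- the modulus function g r x = sup over dense points in ball θ₀ r ∩ Θ₀
  set g : ℝ → 𝒳 → ℝ := fun r x =>
    ⨆ j : ℕ, if u j ∈ Metric.ball θ₀ r ∩ Θ₀ then ‖f (u j) x - f θ₀ x‖ else 0 with hg_def
  have hterm_le : ∀ (r : ℝ) (x : 𝒳) (j : ℕ),
      (if u j ∈ Metric.ball θ₀ r ∩ Θ₀ then ‖f (u j) x - f θ₀ x‖ else 0) ≤ 2 * F x := by
    intro r x j
    split_ifs with h
    · have h1 : ‖f (u j) x‖ ≤ F x := hF_dom _ h.2 x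
      have h2 : ‖f θ₀ x‖ ≤ F x := hF_dom _ hθ₀ x
      calc ‖f (u j) x - f θ₀ x‖ ≤ ‖f (u j) x‖ + ‖f θ₀ x‖ := norm_sub_le _ _
        _ ≤ 2 * F x := by linarith
    · linarith [hF0 x]
  have hbdd : ∀ (r : ℝ) (x : 𝒳), BddAbove (Set.range fun j : ℕ =>
      if u j ∈ Metric.ball θ₀ r ∩ Θ₀ then ‖f (u j) x - f θ₀ x‖ else 0) := by
    intro r x
    exact ⟨2 * F x, by rintro y ⟨j, rfl⟩; exact hterm_le r x j⟩
  have hg_le : ∀ (r : ℝ) (x : 𝒳), g r x ≤ 2 * F x := fun r x => ciSup_le (hterm_le r x)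
  have hg_nonneg : ∀ (r : ℝ) (x : 𝒳), 0 ≤ g r x := by
    intro r x
    refine le_trans ?_ (le_ciSup (hbdd r x) 0)
    split_ifs with h
    · exact norm_nonneg _
    · exact le_rfl
  have hg_meas : ∀ r : ℝ, Measurable (g r) := by
    intro r
    refine Measurable.iSup fun j => ?_
    by_cases h : u j ∈ Metric.ball θ₀ r ∩ Θ₀
    · simp only [if_pos h]
      exact ((hf_meas _ (hΘ₀Θ h.2)).sub hfθ₀_meas).norm
    · simp only [if_neg h]
      exact measurable_const
  -- key domination property
  have hg_key : ∀ r : ℝ, ∀ θ ∈ Metric.ball θ₀ r ∩ Θ₀, ∀ x : 𝒳,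
      ‖f θ x - f θ₀ x‖ ≤ g r x := by
    intro r θ hθ x
    refine le_of_forall_pos_le_add fun ε' hε' => ?_
    have hcont : ContinuousAt (fun θ' => ‖f θ' x - f θ₀ x‖) θ := by
      have h1 : ContinuousAt (fun θ' => f θ' x) θ :=
        (hf_cont x).continuousAt (hΘ₀open.mem_nhds hθ.2)
      exact (h1.sub continuousAt_const).norm
    have hnhds : (fun θ' => ‖f θ' x - f θ₀ x‖) ⁻¹' Set.Ioi (‖f θ x - f θ₀ x‖ - ε') ∈ nhds θ :=
      hcont (Ioi_mem_nhds (by linarith))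
    obtain ⟨O, hOsub, hOopen, hθO⟩ := mem_nhds_iff.1 hnhds
    have hopen : IsOpen (O ∩ (Metric.ball θ₀ r ∩ Θ₀)) :=
      hOopen.inter (Metric.isOpen_ball.inter hΘ₀open)
    obtain ⟨j, hj⟩ := hu.exists_mem_open hopen ⟨θ, hθO, hθ⟩
    have hjle : ‖f (u j) x - f θ₀ x‖ ≤ g r x := by
      have := le_ciSup (hbdd r x) j
      rwa [if_pos hj.2] at this
    have : ‖f θ x - f θ₀ x‖ - ε' < ‖f (u j) x - f θ₀ x‖ := hOsub hj.1
    linarith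
  -- radius sequence
  obtain ⟨r₀, hr₀pos, hr₀sub⟩ := Metric.isOpen_iff.1 hΘ₀open θ₀ hθ₀
  set rseq : ℕ → ℝ := fun m => r₀ / (m + 1) with hrseq_def
  have hrseq_pos : ∀ m, 0 < rseq m := fun m => by positivity
  have hrseq_le : ∀ m, rseq m ≤ r₀ := by
    intro m
    rw [hrseq_def]
    rw [div_le_iff₀ (by positivity)]
    nlinarith [Nat.cast_nonneg (α := ℝ) m]
  have hball_sub : ∀ m, Metric.ball θ₀ (rseq m) ⊆ Θ₀ := fun m =>
    (Metric.ball_subset_ball (hrseq_le m)).trans hr₀sub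
  -- pointwise convergence of g (rseq m) x to 0
  have hg_tendsto : ∀ x : 𝒳,
      Filter.Tendsto (fun m : ℕ => g (rseq m) (x)) Filter.atTop (nhds 0) := by
    intro x
    rw [Metric.tendsto_atTop]
    intro ε' hε'
    have hcont : ContinuousAt (fun θ' => f θ' x) θ₀ :=
      (hf_cont x).continuousAt (hΘ₀open.mem_nhds hθ₀)
    rw [Metric.continuousAt_iff] at hcont
    obtain ⟨ρ, hρpos, hρ⟩ := hcont (ε' / 2) (by linarith)
    obtain ⟨N, hN⟩ := exists_nat_gt (r₀ / ρ)
    refine ⟨N, fun m hm => ?_⟩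
    have hrlt : rseq m < ρ := by
      rw [hrseq_def]
      rw [div_lt_iff₀ (by positivity)]
      have h1 : (N : ℝ) ≤ (m : ℝ) := Nat.cast_le.2 hm
      have h2 : r₀ / ρ < (m : ℝ) + 1 := by linarith
      calc r₀ = (r₀ / ρ) * ρ := by field_simp
        _ < ((m : ℝ) + 1) * ρ := by nlinarith
        _ = ρ * ((m : ℝ) + 1) := by ring
    have hle : g (rseq m) x ≤ ε' / 2 := by
      refine ciSup_le fun j => ?_
      split_ifs with h
      · have : dist (u j) θ₀ < ρ := lt_of_lt_of_le (Metric.mem_ball.1 h.1) hrlt.le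
        have := (hρ this).le
        rwa [dist_eq_norm] at this
      · linarith
    rw [Real.dist_eq, sub_zero, abs_of_nonneg (hg_nonneg _ _)]
    linarith
  -- identical distribution and independence transported through measurable maps
  have hident : ∀ i, IdentDistrib (X i) (X 0) P P := fun i =>
    ⟨(hX_meas i).aemeasurable, (hX_meas 0).aemeasurable, hX_ident i⟩
  -- SLLN for f θ₀ ∘ X
  set m₀ : EuclideanSpace ℝ (Fin k) := ∫ ω, f θ₀ (X 0 ω) ∂P with hm₀_def
  have hYint : Integrable (fun ω => f θ₀ (X 0 ω)) P := by
    refine hF_int.mono ((hfθ₀_meas.comp (hX_meas 0)).aestronglyMeasurable) ?_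
    filter_upwards with ω
    rw [Real.norm_eq_abs, abs_of_nonneg (hF0 _)]
    exact hF_dom θ₀ hθ₀ _
  have hS_ae : ∀ᵐ ω ∂P, Filter.Tendsto
      (fun n : ℕ => (n : ℝ)⁻¹ • ∑ i ∈ Finset.range n, f θ₀ (X i ω)) Filter.atTop (nhds m₀) := by
    apply strong_law_ae
    · exact hYint
    · intro i j hij
      exact (hX_indep.indepFun hij).comp hfθ₀_meas hfθ₀_meas
    · exact fun i => (hident i).comp hfθ₀_meas
  have hS_meas : ∀ n : ℕ, AEStronglyMeasurable
      (fun ω => (n : ℝ)⁻¹ • ∑ i ∈ Finset.range n, f θ₀ (X i ω)) P := by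
    intro n
    exact (((Finset.range n).measurable_sum fun i _ =>
      hfθ₀_meas.comp (hX_meas i)).const_smul ((n : ℝ)⁻¹)).aestronglyMeasurable
  have hSμ : TendstoInMeasure P
      (fun (n : ℕ) ω => (n : ℝ)⁻¹ • ∑ i ∈ Finset.range n, f θ₀ (X i ω)) Filter.atTop
      (fun _ => m₀) := tendstoInMeasure_of_tendsto_ae hS_meas hS_ae
  -- integrals of g (rseq m) ∘ X 0 tend to 0
  have hgint : ∀ m, Integrable (fun ω => g (rseq m) (X 0 ω)) P := by
    intro m
    refine (hF_int.const_mul 2).mono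
      (((hg_meas _).comp (hX_meas 0)).aestronglyMeasurable) ?_
    filter_upwards with ω
    rw [Real.norm_eq_abs, abs_of_nonneg (hg_nonneg _ _), Real.norm_eq_abs]
    exact (hg_le _ _).trans (le_abs_self _)
  have hI_tendsto : Filter.Tendsto (fun m : ℕ => ∫ ω, g (rseq m) (X 0 ω) ∂P)
      Filter.atTop (nhds 0) := by
    have h0 : (0 : ℝ) = ∫ (_ : Ω), (0 : ℝ) ∂P := by simp
    rw [h0]
    refine tendsto_integral_of_dominated_convergence (fun ω => 2 * F (X 0 ω))
      (fun m => ((hg_meas _).comp (hX_meas 0)).aestronglyMeasurable)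
      (hF_int.const_mul 2) (fun m => ?_) ?_
    · filter_upwards with ω
      rw [Real.norm_eq_abs, abs_of_nonneg (hg_nonneg _ _)]
      exact hg_le _ _
    · filter_upwards with ω
      exact hg_tendsto (X 0 ω)
  -- main argument
  rw [tendstoInMeasure_iff_dist]
  intro ε hε
  -- choose a radius with small modulus integral
  have h4 : (0 : ℝ) < ε / 4 := by linarith
  obtain ⟨M, hM⟩ := (Metric.tendsto_atTop.1 hI_tendsto) (ε / 4) h4
  set r : ℝ := rseq M with hr_def
  set I : ℝ := ∫ ω, g r (X 0 ω) ∂P with hI_def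
  have hIlt : I < ε / 4 := by
    have := hM M le_rfl
    rw [Real.dist_eq, sub_zero] at this
    calc I ≤ |∫ ω, g r (X 0 ω) ∂P| := le_abs_self _
      _ < ε / 4 := this
  have hrpos : 0 < r := hrseq_pos M
  -- SLLN for g r ∘ X
  have hG_ae : ∀ᵐ ω ∂P, Filter.Tendsto
      (fun n : ℕ => (∑ i ∈ Finset.range n, g r (X i ω)) / n) Filter.atTop (nhds I) := by
    apply strong_law_ae_real
    · exact hgint M
    · intro i j hij
      exact (hX_indep.indepFun hij).comp (hg_meas r) (hg_meas r)
    · exact fun i => (hident i).comp (hg_meas r)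
  have hG_meas : ∀ n : ℕ, AEStronglyMeasurable
      (fun ω => (∑ i ∈ Finset.range n, g r (X i ω)) / n) P := by
    intro n
    exact (((Finset.range n).measurable_sum fun i _ =>
      (hg_meas r).comp (hX_meas i)).div_const _).aestronglyMeasurable
  have hGμ : TendstoInMeasure P
      (fun n ω => (∑ i ∈ Finset.range n, g r (X i ω)) / n) Filter.atTop
      (fun _ => I) := tendstoInMeasure_of_tendsto_ae hG_meas hG_ae
  -- the three bad events
  have hA : Filter.Tendsto (fun n => P {ω | r ≤ dist (θhat n ω) θ₀}) Filter.atTop (nhds 0) :=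
    tendstoInMeasure_iff_dist.1 hθhat_tendsto r hrpos
  have hεI : 0 < ε / 2 - I := by linarith
  have hBaux : Filter.Tendsto
      (fun n => P {ω | ε / 2 - I ≤ dist ((∑ i ∈ Finset.range n, g r (X i ω)) / n) I})
      Filter.atTop (nhds 0) := tendstoInMeasure_iff_dist.1 hGμ (ε / 2 - I) hεI
  have hB : Filter.Tendsto
      (fun n => P {ω | ε / 2 ≤ (∑ i ∈ Finset.range n, g r (X i ω)) / n})
      Filter.atTop (nhds 0) := by
    refine tendsto_of_tendsto_of_tendsto_of_le_of_le tendsto_const_nhds hBaux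
      (fun n => zero_le) (fun n => ?_)
    refine measure_mono fun ω hω => ?_
    simp only [Set.mem_setOf_eq] at hω ⊢
    rw [Real.dist_eq]
    have : ε / 2 - I ≤ (∑ i ∈ Finset.range n, g r (X i ω)) / n - I := by linarith
    exact this.trans (le_abs_self _)
  have hC : Filter.Tendsto
      (fun (n : ℕ) => P {ω | ε / 2 ≤
        dist ((n : ℝ)⁻¹ • ∑ i ∈ Finset.range n, f θ₀ (X i ω)) m₀})
      Filter.atTop (nhds 0) := tendstoInMeasure_iff_dist.1 hSμ (ε / 2) (by linarith)
  -- event inclusion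
  have hincl : ∀ n : ℕ,
      {ω | ε ≤ dist ((n : ℝ)⁻¹ • ∑ i ∈ Finset.range n, f (θhat n ω) (X i ω)) m₀} ⊆
        {ω | r ≤ dist (θhat n ω) θ₀} ∪
        {ω | ε / 2 ≤ (∑ i ∈ Finset.range n, g r (X i ω)) / n} ∪
        {ω | ε / 2 ≤ dist ((n : ℝ)⁻¹ • ∑ i ∈ Finset.range n, f θ₀ (X i ω)) m₀} := by
    intro n ω hω
    simp only [Set.mem_setOf_eq] at hω
    by_cases hA' : r ≤ dist (θhat n ω) θ₀
    · exact Or.inl (Or.inl hA')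
    push_neg at hA'
    by_cases hB' : ε / 2 ≤ (∑ i ∈ Finset.range n, g r (X i ω)) / n
    · exact Or.inl (Or.inr hB')
    push_neg at hB'
    right
    simp only [Set.mem_setOf_eq]
    -- bound the difference of the two averages
    have hmem : θhat n ω ∈ Metric.ball θ₀ r ∩ Θ₀ :=
      ⟨Metric.mem_ball.2 hA', hball_sub M (Metric.mem_ball.2 hA')⟩
    have hdiff : ‖((n : ℝ)⁻¹ • ∑ i ∈ Finset.range n, f (θhat n ω) (X i ω)) -
        ((n : ℝ)⁻¹ • ∑ i ∈ Finset.range n, f θ₀ (X i ω))‖ ≤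
        (∑ i ∈ Finset.range n, g r (X i ω)) / n := by
      rw [← smul_sub, ← Finset.sum_sub_distrib, norm_smul]
      rw [div_eq_inv_mul]
      have h1 : ‖((n : ℝ)⁻¹)‖ = (n : ℝ)⁻¹ := by
        rw [Real.norm_eq_abs, abs_of_nonneg (by positivity)]
      rw [h1]
      refine mul_le_mul_of_nonneg_left ?_ (by positivity)
      refine (norm_sum_le _ _).trans ?_
      refine Finset.sum_le_sum fun i _ => ?_
      exact hg_key r (θhat n ω) hmem (X i ω)
    have htri : dist ((n : ℝ)⁻¹ • ∑ i ∈ Finset.range n, f (θhat n ω) (X i ω)) m₀ ≤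
        ‖((n : ℝ)⁻¹ • ∑ i ∈ Finset.range n, f (θhat n ω) (X i ω)) -
          ((n : ℝ)⁻¹ • ∑ i ∈ Finset.range n, f θ₀ (X i ω))‖ +
        dist ((n : ℝ)⁻¹ • ∑ i ∈ Finset.range n, f θ₀ (X i ω)) m₀ := by
      rw [← dist_eq_norm]
      exact dist_triangle _ _ _
    linarith
  -- combine
  refine tendsto_of_tendsto_of_tendsto_of_le_of_le tendsto_const_nhds
    (((hA.add hB).add hC).mono_right (by rw [add_zero, add_zero])) (fun n => zero_le)
    (fun n => ?_)
  calc P {ω | ε ≤ dist ((n : ℝ)⁻¹ • ∑ i ∈ Finset.range n, f (θhat n ω) (X i ω)) m₀}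
      ≤ P ({ω | r ≤ dist (θhat n ω) θ₀} ∪
          {ω | ε / 2 ≤ (∑ i ∈ Finset.range n, g r (X i ω)) / n} ∪
          {ω | ε / 2 ≤ dist ((n : ℝ)⁻¹ • ∑ i ∈ Finset.range n, f θ₀ (X i ω)) m₀}) :=
        measure_mono (hincl n)
    _ ≤ _ := le_trans (measure_union_le _ _)
        (add_le_add_left (measure_union_le _ _) _)
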